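/- Let A be an enumeration of the q-1 elements of the multiplicative group F_q^* and 1 < k < q-1. Then Per(RS(A,k)) is isomorphic to the group of linear maps x ↦ ax with a ∈ F_q^*, i.e., to F_q^*. -/

import Mathlib

open Polynomial

namespace RSperm
open Finset

variable {F : Type*} [Field F] [Fintype F] {n k : ℕ}

lemma sum_pow (a : Fin n → F) (ha : Function.Injective a)
    (hrange : Set.range a = {x : F | x ≠ 0}) (u : ℕ) :
    ∑ i, a i ^ u = if (Fintype.card F - 1) ∣ u then (-1 : F) else 0 := by
  classical
  have hne : ∀ i, a i ≠ 0 := fun i => by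
    have h : a i ∈ {x : F | x ≠ 0} := hrange ▸ Set.mem_range_self i
    exact h
  let b : Fin n → Fˣ := fun i => Units.mk0 (a i) (hne i)
  have hb : Function.Bijective b := by
    constructor
    · intro i j h
      exact ha (congrArg Units.val h)
    · intro x
      have hx : (x : F) ∈ Set.range a := by rw [hrange]; exact x.ne_zero
      obtain ⟨i, hi⟩ := hx
      exact ⟨i, Units.ext hi⟩
  have h1 : ∑ i, a i ^ u = ∑ x : Fˣ, ((x : F)) ^ u :=
    Fintype.sum_bijective b hb _ _ (fun i => rfl)
  rw [h1]
  rw [← FiniteField.sum_pow_units F u]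

lemma card_eq (a : Fin n → F) (ha : Function.Injective a)
    (hrange : Set.range a = {x : F | x ≠ 0}) : n = Fintype.card F - 1 := by
  classical
  have hne : ∀ i, a i ≠ 0 := fun i => by
    have h : a i ∈ {x : F | x ≠ 0} := hrange ▸ Set.mem_range_self i
    exact h
  let b : Fin n → Fˣ := fun i => Units.mk0 (a i) (hne i)
  have hb : Function.Bijective b := by
    constructor
    · intro i j h
      exact ha (congrArg Units.val h)
    · intro x
      have hx : (x : F) ∈ Set.range a := by rw [hrange]; exact x.ne_zero
      obtain ⟨i, hi⟩ := hx
      exact ⟨i, Units.ext hi⟩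
  have := Fintype.card_of_bijective hb
  rwa [Fintype.card_fin, Fintype.card_units] at this


lemma key (hk : 1 < k) (hkq : k < Fintype.card F - 1)
    (a : Fin n → F) (ha : Function.Injective a)
    (hrange : Set.range a = {x : F | x ≠ 0})
    (π : Equiv.Perm (Fin n))
    (hπ : (fun v : Fin n → F => fun i => v (π i)) ''
            {v : Fin n → F | ∃ f : F[X], f.degree < (k : ℕ) ∧ v = fun i => f.eval (a i)} =
          {v : Fin n → F | ∃ f : F[X], f.degree < (k : ℕ) ∧ v = fun i => f.eval (a i)}) :
    ∃ c : F, c ≠ 0 ∧ ∀ i, a (π i) = c * a i := by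
  classical
  set q := Fintype.card F with hqdef
  have hn : n = q - 1 := card_eq a ha hrange
  have hq4 : 4 ≤ q := by omega
  have hne : ∀ i, a i ≠ 0 := fun i => by
    have h : a i ∈ {x : F | x ≠ 0} := hrange ▸ Set.mem_range_self i
    exact h
  -- forward and backward closure of the code under the permutation action
  have hfwd : ∀ f : F[X], f.degree < (k : ℕ) →
      ∃ g : F[X], g.degree < (k : ℕ) ∧ ∀ i, f.eval (a (π i)) = g.eval (a i) := by
    intro f hf
    have hmem : (fun i => f.eval (a (π i))) ∈
        {v : Fin n → F | ∃ f : F[X], f.degree < (k : ℕ) ∧ v = fun i => f.eval (a i)} := by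
      rw [← hπ]
      exact ⟨fun i => f.eval (a i), ⟨f, hf, rfl⟩, rfl⟩
    obtain ⟨g, hg, hg2⟩ := hmem
    exact ⟨g, hg, fun i => congrFun hg2 i⟩
  have hbwd : ∀ f : F[X], f.degree < (k : ℕ) →
      ∃ g : F[X], g.degree < (k : ℕ) ∧ ∀ i, f.eval (a (π⁻¹ i)) = g.eval (a i) := by
    intro f hf
    have hmem : (fun i => f.eval (a i)) ∈
        {v : Fin n → F | ∃ f : F[X], f.degree < (k : ℕ) ∧ v = fun i => f.eval (a i)} :=
      ⟨f, hf, rfl⟩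
    rw [← hπ] at hmem
    obtain ⟨w, ⟨g, hg, rfl⟩, hw⟩ := hmem
    refine ⟨g, hg, fun i => ?_⟩
    have h1 := congrFun hw (π⁻¹ i)
    simp only at h1
    rw [← h1, Equiv.Perm.coe_inv, Equiv.apply_symm_apply]
  -- powers of the permuted evaluation vector are low-degree evaluation vectors
  have hpows : ∀ (ρ : Equiv.Perm (Fin n)),
      (∀ f : F[X], f.degree < (k : ℕ) →
        ∃ g : F[X], g.degree < (k : ℕ) ∧ ∀ i, f.eval (a (ρ i)) = g.eval (a i)) →
      ∀ j, j < k → ∃ g : F[X], g.natDegree < k ∧ ∀ i, (a (ρ i)) ^ j = g.eval (a i) := by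
    intro ρ hρ j hj
    obtain ⟨g, hg, hgi⟩ := hρ (X ^ j) (by rw [degree_X_pow]; exact_mod_cast hj)
    refine ⟨g, ?_, fun i => by simpa using hgi i⟩
    rcases eq_or_ne g 0 with rfl | h0
    · simpa using by omega
    · exact (natDegree_lt_iff_degree_lt h0).mpr hg
  have hsπ := hpows π hfwd
  have hsτ := hpows π⁻¹ hbwd
  -- the basic vanishing of mixed power sums
  have vanish : ∀ (s : Fin n → F),
      (∀ j, j < k → ∃ g : F[X], g.natDegree < k ∧ ∀ i, (s i) ^ j = g.eval (a i)) →
      ∀ u w, u < k → 1 ≤ w → w ≤ q - 1 - k → ∑ i, s i ^ u * a i ^ w = 0 := by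
    intro s hs u w hu hw1 hw2
    obtain ⟨g, hg, hgi⟩ := hs u hu
    calc ∑ i, s i ^ u * a i ^ w
        = ∑ i, (∑ e ∈ Finset.range k, g.coeff e * a i ^ e) * a i ^ w :=
          Finset.sum_congr rfl fun i _ => by rw [hgi, eval_eq_sum_range' hg]
      _ = ∑ e ∈ Finset.range k, ∑ i, g.coeff e * a i ^ (e + w) := by
          simp_rw [Finset.sum_mul, mul_assoc, ← pow_add]
          exact Finset.sum_comm
      _ = 0 := by
          refine Finset.sum_eq_zero fun e he => ?_
          rw [← Finset.mul_sum, sum_pow a ha hrange, if_neg, mul_zero]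
          intro hd
          have he' : e < k := Finset.mem_range.mp he
          have := Nat.le_of_dvd (by omega) hd
          omega
  -- reindexing sums along the permutation
  have reindex : ∀ u w : ℕ, ∑ i, a (π i) ^ u * a i ^ w = ∑ i, a i ^ u * a (π⁻¹ i) ^ w := by
    intro u w
    rw [← Equiv.sum_comp π (fun i => a i ^ u * a (π⁻¹ i) ^ w)]
    exact Finset.sum_congr rfl fun i _ => by rw [Equiv.Perm.coe_inv, Equiv.symm_apply_apply]
  set m := min (k - 1) (q - 1 - k) with hmdef
  have hmor : m = k - 1 ∨ m = q - 1 - k := min_choice _ _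
  have hm1 : 1 ≤ m := by omega
  have hmk : m ≤ k - 1 := min_le_left _ _
  have hmq : m ≤ q - 1 - k := min_le_right _ _
  -- Step A : vanishing of the relevant power sums
  have hA : ∀ u w, 1 ≤ u → u ≤ m → w ≤ q - 2 - m → ∑ i, a (π i) ^ u * a i ^ w = 0 := by
    intro u w hu1 hum hwm
    rcases Nat.eq_zero_or_pos w with rfl | hw1
    · have h1 : ∑ i, a (π i) ^ u * a i ^ 0 = ∑ i, a (π i) ^ u := by simp
      rw [h1, Equiv.sum_comp π (fun i => a i ^ u), sum_pow a ha hrange, if_neg]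
      intro hd
      have := Nat.le_of_dvd (by omega) hd
      omega
    · rcases le_or_gt w (q - 1 - k) with hw2 | hw2
      · exact vanish (fun i => a (π i)) hsπ u w (by omega) hw1 hw2
      · rw [reindex u w]
        have h2 := vanish (fun i => a (π⁻¹ i)) hsτ w u (by omega) hu1 (by omega)
        rw [← h2]
        exact Finset.sum_congr rfl fun i _ => mul_comm _ _
  -- Step B : reconstruction of powers as low-degree polynomials
  set G : ℕ → F[X] := fun j =>
    ∑ e ∈ Finset.Icc 1 m, Polynomial.C (-(∑ i, a (π i) ^ j * a i ^ (q - 1 - e))) * X ^ e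
    with hGdef
  have hGnat : ∀ j, (G j).natDegree ≤ m := by
    intro j
    refine natDegree_sum_le_of_forall_le _ _ fun e he => ?_
    exact le_trans (natDegree_C_mul_X_pow_le _ _) (Finset.mem_Icc.mp he).2
  have hGsum : ∀ j w, w ≤ q - 2 → ∑ i, (G j).eval (a i) * a i ^ w =
      if q - 1 - w ∈ Finset.Icc 1 m then ∑ i, a (π i) ^ j * a i ^ w else 0 := by
    intro j w hw
    calc ∑ i, (G j).eval (a i) * a i ^ w
        = ∑ e ∈ Finset.Icc 1 m,
            (-(∑ i, a (π i) ^ j * a i ^ (q - 1 - e))) * ∑ i, a i ^ (e + w) := by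
          simp only [hGdef, eval_finset_sum, eval_mul, eval_C, eval_pow, eval_X]
          simp_rw [Finset.sum_mul, mul_assoc, ← pow_add]
          rw [Finset.sum_comm]
          exact Finset.sum_congr rfl fun e _ => by rw [Finset.mul_sum]
      _ = ∑ e ∈ Finset.Icc 1 m,
            (if e = q - 1 - w then ∑ i, a (π i) ^ j * a i ^ w else 0) := by
          refine Finset.sum_congr rfl fun e he => ?_
          rcases Finset.mem_Icc.mp he with ⟨he1, he2⟩
          rw [sum_pow a ha hrange]
          by_cases hcase : e = q - 1 - w
          · have hew : e + w = q - 1 := by omega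
            rw [if_pos (hew ▸ dvd_refl _), if_pos hcase]
            have hweq : q - 1 - e = w := by omega
            rw [hweq]
            ring
          · rw [if_neg ?_, if_neg hcase, mul_zero]
            intro hd
            rw [← hqdef] at hd
            obtain ⟨c, hc⟩ := hd
            have hc1 : c ≠ 0 := by rintro rfl; omega
            have hc2 : c = 1 := by
              by_contra hcc
              have h2c : 2 ≤ c := by omega
              have := Nat.mul_le_mul_left (q - 1) h2c
              omega
            rw [hc2, mul_one] at hc
            omega
      _ = if q - 1 - w ∈ Finset.Icc 1 m then ∑ i, a (π i) ^ j * a i ^ w else 0 :=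
          Finset.sum_ite_eq' _ _ _
  have hB : ∀ j, 1 ≤ j → j ≤ m → ∀ i, a (π i) ^ j = (G j).eval (a i) := by
    intro j hj1 hjm
    have hv : (fun i => a (π i) ^ j - (G j).eval (a i)) = 0 := by
      apply Matrix.eq_zero_of_forall_pow_sum_mul_pow_eq_zero ha
      intro w
      have hw : (w : ℕ) ≤ q - 2 := by have := w.isLt; omega
      have hsplit : ∑ i, (a (π i) ^ j - (G j).eval (a i)) * a i ^ (w : ℕ)
          = (∑ i, a (π i) ^ j * a i ^ (w : ℕ)) - ∑ i, (G j).eval (a i) * a i ^ (w : ℕ) := by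
        rw [← Finset.sum_sub_distrib]
        exact Finset.sum_congr rfl fun i _ => by ring
      rw [hsplit, hGsum j w hw]
      by_cases hcase : q - 1 - (w : ℕ) ∈ Finset.Icc 1 m
      · rw [if_pos hcase, sub_self]
      · rw [if_neg hcase, sub_zero]
        apply hA j (w : ℕ) hj1 hjm
        rw [Finset.mem_Icc] at hcase
        omega
    intro i
    have := congrFun hv i
    simpa [sub_eq_zero] using this
  -- Step C : the polynomial representing the permutation is linear
  set g : F[X] := G 1 with hgdef
  have hg1 : ∀ i, a (π i) = g.eval (a i) := by
    intro i
    have h := hB 1 le_rfl hm1 i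
    rw [pow_one] at h
    rw [hgdef]
    exact h
  have hpow : ∀ j, 1 ≤ j → j ≤ m → g ^ j = G j := by
    intro j hj1 hjm
    induction j with
    | zero => omega
    | succ j ih =>
      rcases Nat.eq_zero_or_pos j with rfl | hj0
      · simpa using hgdef.symm
      · have ihj := ih (by omega) (by omega)
        have hdgj : (g ^ j).natDegree ≤ m := by rw [ihj]; exact hGnat j
        have hdg : g.natDegree ≤ m := hGnat 1
        have hd1 : (g ^ (j + 1)).natDegree ≤ 2 * m := by
          rw [pow_succ]
          exact le_trans (natDegree_mul_le) (by omega)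
        have hsub : g ^ (j + 1) - G (j + 1) = 0 := by
          apply Polynomial.eq_zero_of_natDegree_lt_card_of_eval_eq_zero _ ha
          · intro i
            rw [eval_sub, eval_pow, ← hg1 i, ← hB (j + 1) (by omega) hjm i, sub_self]
          · have h2 := hGnat (j + 1)
            have h3 : (g ^ (j + 1) - G (j + 1)).natDegree ≤ 2 * m :=
              le_trans (natDegree_sub_le _ _) (by omega)
            have h4 : Fintype.card (Fin n) = n := Fintype.card_fin n
            omega
        exact sub_eq_zero.mp hsub
  have hdeg1 : g.natDegree ≤ 1 := by
    have h1 := hpow m hm1 le_rfl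
    have h2 : (g ^ m).natDegree = m * g.natDegree := natDegree_pow g m
    have h3 : (g ^ m).natDegree ≤ m := h1 ▸ hGnat m
    by_contra hcon
    have hd2 : 2 ≤ g.natDegree := by omega
    have := Nat.mul_le_mul_left m hd2
    omega
  have hc0 : g.coeff 0 = 0 := by
    rw [hgdef, hGdef]
    simp only [finset_sum_coeff, coeff_C_mul, coeff_X_pow]
    refine Finset.sum_eq_zero fun e he => ?_
    rw [if_neg, mul_zero]
    have := (Finset.mem_Icc.mp he).1
    omega
  have heval : ∀ x, g.eval x = g.coeff 1 * x := by
    intro x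
    rw [eval_eq_sum_range' (show g.natDegree < 2 by omega)]
    simp [Finset.sum_range_succ, hc0]
  refine ⟨g.coeff 1, ?_, fun i => by rw [hg1 i, heval]⟩
  intro hzero
  have hi0 : a (π ⟨0, by omega⟩) ≠ 0 := hne _
  rw [hg1 ⟨0, by omega⟩, heval, hzero, zero_mul] at hi0
  exact hi0 rfl

end RSperm

/-- If A is an enumeration of the q-1 nonzero elements of F_q and
1 < k < q-1, then Per(RS(A,k)) is isomorphic to the multiplicative group F_q^*
(the group of linear maps x ↦ ax, a ≠ 0). -/
theorem perm_group_RS_mult_group {F : Type*} [Field F] [Fintype F] {n k : ℕ}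
    (hk : 1 < k) (hkq : k < Fintype.card F - 1)
    (a : Fin n → F) (ha : Function.Injective a)
    (hrange : Set.range a = {x : F | x ≠ 0}) :
    ∃ Φ : {π : Equiv.Perm (Fin n) //
        (fun v : Fin n → F => fun i => v (π i)) ''
            {v : Fin n → F | ∃ f : F[X], f.degree < (k : ℕ) ∧ v = fun i => f.eval (a i)} =
          {v : Fin n → F | ∃ f : F[X], f.degree < (k : ℕ) ∧ v = fun i => f.eval (a i)}} →
      Fˣ,
      Function.Bijective Φ ∧
      ∀ (π₁ π₂ : Equiv.Perm (Fin n)) (h₁ : _) (h₂ : _) (h₁₂ : _),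
        Φ ⟨π₁ * π₂, h₁₂⟩ = Φ ⟨π₁, h₁⟩ * Φ ⟨π₂, h₂⟩ := by
  classical
  have hn : n = Fintype.card F - 1 := RSperm.card_eq a ha hrange
  have hq4 : 4 ≤ Fintype.card F := by omega
  have hne : ∀ i, a i ≠ 0 := fun i => by
    have h : a i ∈ {x : F | x ≠ 0} := hrange ▸ Set.mem_range_self i
    exact h
  have hn0 : 0 < n := by omega
  set i₀ : Fin n := ⟨0, hn0⟩ with hi₀
  refine ⟨fun π => Units.mk0 (a (π.1 i₀) * (a i₀)⁻¹)
      (mul_ne_zero (hne _) (inv_ne_zero (hne _))), ⟨?_, ?_⟩, ?_⟩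
  · -- injectivity
    intro π π' hφ
    obtain ⟨c, hc0, hc⟩ := RSperm.key hk hkq a ha hrange π.1 π.2
    obtain ⟨c', hc0', hc'⟩ := RSperm.key hk hkq a ha hrange π'.1 π'.2
    have e1 : a (π.1 i₀) * (a i₀)⁻¹ = c := by
      rw [hc i₀, mul_assoc, mul_inv_cancel₀ (hne i₀), mul_one]
    have e2 : a (π'.1 i₀) * (a i₀)⁻¹ = c' := by
      rw [hc' i₀, mul_assoc, mul_inv_cancel₀ (hne i₀), mul_one]
    have hv := congrArg Units.val hφ
    simp only [Units.val_mk0] at hv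
    rw [e1, e2] at hv
    apply Subtype.ext
    apply Equiv.ext
    intro i
    apply ha
    rw [hc i, hc' i, hv]
  · -- surjectivity
    intro u
    let b : Fin n → Fˣ := fun i => Units.mk0 (a i) (hne i)
    have hb : Function.Bijective b := by
      constructor
      · intro i j h
        exact ha (congrArg Units.val h)
      · intro x
        have hx : (x : F) ∈ Set.range a := by rw [hrange]; exact x.ne_zero
        obtain ⟨i, hi⟩ := hx
        exact ⟨i, Units.ext hi⟩
    let eb : Fin n ≃ Fˣ := Equiv.ofBijective b hb
    let σ : Equiv.Perm (Fin n) := eb.trans ((Equiv.mulLeft u).trans eb.symm)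
    have hσ : ∀ i, a (σ i) = (u : F) * a i := by
      intro i
      have h1 : b (σ i) = u * b i := by
        show eb (eb.symm ((Equiv.mulLeft u) (eb i))) = u * eb i
        rw [Equiv.apply_symm_apply]
        rfl
      have := congrArg Units.val h1
      exact this
    have hdegaux : ∀ (c : F) (hc : c ≠ 0) (f : F[X]), f.degree < (k : ℕ) →
        (f.comp (C c * X)).degree < (k : ℕ) := by
      intro c hc f hf
      rcases eq_or_ne f 0 with rfl | h0
      · simpa [zero_comp] using hf
      · have hf' : f.natDegree < k := (natDegree_lt_iff_degree_lt h0).mpr hf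
        have h1 : (f.comp (C c * X)).natDegree = f.natDegree := by
          rw [natDegree_comp, natDegree_C_mul_X c hc, mul_one]
        refine lt_of_le_of_lt degree_le_natDegree ?_
        rw [h1]
        exact_mod_cast hf'
    have hmem : (fun v : Fin n → F => fun i => v (σ i)) ''
            {v : Fin n → F | ∃ f : F[X], f.degree < (k : ℕ) ∧ v = fun i => f.eval (a i)} =
          {v : Fin n → F | ∃ f : F[X], f.degree < (k : ℕ) ∧ v = fun i => f.eval (a i)} := by
      ext v
      constructor
      · rintro ⟨w, ⟨f, hf, rfl⟩, rfl⟩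
        refine ⟨f.comp (C (u : F) * X), hdegaux (u : F) (Units.ne_zero u) f hf, ?_⟩
        funext i
        rw [eval_comp]
        simp [hσ i]
      · rintro ⟨f, hf, rfl⟩
        refine ⟨fun i => (f.comp (C ((u⁻¹ : Fˣ) : F) * X)).eval (a i),
          ⟨f.comp (C ((u⁻¹ : Fˣ) : F) * X), hdegaux _ (Units.ne_zero u⁻¹) f hf, rfl⟩, ?_⟩
        funext i
        show (f.comp (C ((u⁻¹ : Fˣ) : F) * X)).eval (a (σ i)) = eval (a i) f
        rw [eval_comp]
        simp only [eval_mul, eval_C, eval_X, hσ i]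
        rw [Units.inv_mul_cancel_left]
    refine ⟨⟨σ, hmem⟩, ?_⟩
    apply Units.ext
    simp only [Units.val_mk0]
    rw [hσ i₀, mul_assoc, mul_inv_cancel₀ (hne i₀), mul_one]
  · -- multiplicativity
    intro π₁ π₂ h₁ h₂ h₁₂
    obtain ⟨c₁, hc₁0, hc₁⟩ := RSperm.key hk hkq a ha hrange π₁ h₁
    obtain ⟨c₂, hc₂0, hc₂⟩ := RSperm.key hk hkq a ha hrange π₂ h₂
    apply Units.ext
    simp only [Units.val_mul, Units.val_mk0]
    rw [Equiv.Perm.mul_apply, hc₁ (π₂ i₀), hc₂ i₀, hc₁ i₀]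
    have hx : a i₀ * (a i₀)⁻¹ = 1 := mul_inv_cancel₀ (hne i₀)
    calc c₁ * (c₂ * a i₀) * (a i₀)⁻¹ = c₁ * c₂ * (a i₀ * (a i₀)⁻¹) := by ring
      _ = (c₁ * (a i₀ * (a i₀)⁻¹)) * (c₂ * (a i₀ * (a i₀)⁻¹)) := by rw [hx]; ring
      _ = c₁ * a i₀ * (a i₀)⁻¹ * (c₂ * a i₀ * (a i₀)⁻¹) := by ring
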